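/- Let ℓ ≥ 2, let r^{(1)}, …, r^{(ℓ)} be positive integers with sum r, let α be an integer, and for 2 ≤ i ≤ ℓ set mᵢ = r^{(i)} + r^{(i−1)} and cᵢ = (α/r)·Σ_{k=i}^{ℓ} r^{(k)}. Then for every real y > 1, the series Σ y^{2α(r − r^{(1)}) − 2 Σ_{i=2}^{ℓ} mᵢ sᵢ}, summed over all tuples (s₂, …, s_ℓ) ∈ ℤ^{ℓ−1} with sᵢ > cᵢ for all i, converges absolutely and equals (−1)^{ℓ−1} · Π_{i=2}^{ℓ} y^{2mᵢ{cᵢ}}/(1 − y^{2mᵢ}), where {x} = x − ⌊x⌋ denotes the fractional part. -/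

import Mathlib

set_option maxHeartbeats 1000000


lemma zpow_finset_sum' {ι : Type*} (y : ℝ) (hy : y ≠ 0) (s : Finset ι) (f : ι → ℤ) :
    y ^ (∑ i ∈ s, f i) = ∏ i ∈ s, y ^ f i := by
  classical
  induction s using Finset.induction with
  | empty => simp
  | @insert a s h ih => rw [Finset.sum_insert h, Finset.prod_insert h, zpow_add₀ hy, ih]

lemma hasSum_pi_fin' : ∀ (n : ℕ) (f : Fin n → ℕ → ℝ) (a : Fin n → ℝ),
    (∀ i, HasSum (f i) (a i)) → (∀ i k, 0 ≤ f i k) →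
    HasSum (fun g : Fin n → ℕ => ∏ i, f i (g i)) (∏ i, a i) := by
  intro n
  induction n with
  | zero => intro f a _ _; simpa using hasSum_fintype _
  | succ n ih =>
    intro f a hf hnn
    have htail := ih _ _ (fun i => hf i.succ) (fun i k => hnn i.succ k)
    have h1 : HasSum (fun p : ℕ × (Fin n → ℕ) =>
        f 0 p.1 * ∏ i : Fin n, f i.succ (p.2 i)) (a 0 * ∏ i : Fin n, a i.succ) := by
      apply HasSum.mul (hf 0) htail
      apply summable_mul_of_summable_norm (f := fun k => f 0 k)
          (g := fun g : Fin n → ℕ => ∏ i : Fin n, f i.succ (g i))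
      · simpa [Real.norm_eq_abs, abs_of_nonneg (hnn 0 _)] using (hf 0).summable
      · have h2 := htail.summable
        convert h2 using 2 with g
        simp only [Real.norm_eq_abs, Finset.abs_prod]
        exact Finset.prod_congr rfl fun i _ => abs_of_nonneg (hnn i.succ _)
    rw [Fin.prod_univ_succ]
    rw [← (Fin.consEquiv (fun _ => ℕ)).hasSum_iff]
    convert h1 using 1
    funext p
    simp only [Function.comp, Fin.prod_univ_succ,
      Fin.consEquiv_apply, Fin.cons_zero, Fin.cons_succ]

lemma hasSum_pi' {ι : Type*} [Fintype ι] (f : ι → ℕ → ℝ) (a : ι → ℝ)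
    (hf : ∀ i, HasSum (f i) (a i)) (hnn : ∀ i k, 0 ≤ f i k) :
    HasSum (fun g : ι → ℕ => ∏ i, f i (g i)) (∏ i, a i) := by
  classical
  obtain ⟨n, ⟨e⟩⟩ : ∃ n, Nonempty (ι ≃ Fin n) := ⟨_, ⟨Fintype.equivFin ι⟩⟩
  have h := hasSum_pi_fin' n (fun j => f (e.symm j)) (fun j => a (e.symm j))
    (fun j => hf _) (fun j k => hnn _ k)
  rw [← ((Equiv.arrowCongr e (Equiv.refl ℕ)).symm.hasSum_iff)]
  convert h using 1
  · funext g
    exact Fintype.prod_equiv e _ _ (fun i => by simp [Equiv.arrowCongr])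
  · exact Fintype.prod_equiv e _ _ (fun i => by simp)

lemma aux_geom' (u : ℝ) (hu1 : 1 < u) (b : ℤ) :
    u ^ (-(b + 1)) * (1 - u⁻¹)⁻¹ = -(u ^ (-b) / (1 - u)) := by
  have hu0 : u ≠ 0 := by linarith
  have hns : (1:ℝ) - u ≠ 0 := by intro h; linarith
  have hns' : (1:ℝ) - u⁻¹ ≠ 0 := by
    have : u⁻¹ < 1 := inv_lt_one_of_one_lt₀ hu1
    intro h; linarith
  have e1 : u ^ (-(b + 1)) = u ^ (-b) * u⁻¹ := by
    rw [← zpow_neg_one, ← zpow_add₀ hu0]; congr 1; ring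
  have h : (1 - u⁻¹) = -(1 - u) * u⁻¹ := by field_simp; ring
  rw [e1, div_eq_mul_inv, h, mul_inv, inv_inv, inv_neg]
  have h2 : u⁻¹ * u = 1 := inv_mul_cancel₀ hu0
  linear_combination (-(u ^ (-b) * (1 - u)⁻¹)) * h2

lemma key_factor' {y : ℝ} (hy : 1 < y) (M : ℕ) (hM : 0 < M) (b : ℤ) :
    y ^ (-(2 * (M : ℤ) * (b + 1))) * (1 - y ^ (-(2 * (M : ℤ))))⁻¹
      = -(y ^ (-(2 * (M : ℤ) * b)) / (1 - y ^ (2 * M))) := by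
  have hy0 : (0:ℝ) < y := one_pos.trans hy
  have hyne : y ≠ 0 := hy0.ne'
  have hu1 : 1 < y ^ ((2 * M : ℕ) : ℤ) := by
    rw [zpow_natCast]; exact one_lt_pow₀ hy (by omega)
  have e1 : y ^ (-(2 * (M:ℤ) * (b+1))) = (y ^ ((2 * M : ℕ) : ℤ)) ^ (-(b+1)) := by
    rw [← zpow_mul]; congr 1; push_cast; ring
  have e2 : y ^ (-(2 * (M:ℤ) * b)) = (y ^ ((2 * M : ℕ) : ℤ)) ^ (-b) := by
    rw [← zpow_mul]; congr 1; push_cast; ring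
  have e3 : y ^ (-(2 * (M:ℤ))) = (y ^ ((2 * M : ℕ) : ℤ))⁻¹ := by
    rw [← zpow_neg]; norm_num
  have e4 : y ^ (2 * M) = y ^ ((2 * M : ℕ) : ℤ) := (zpow_natCast y _).symm
  rw [e1, e2, e3, e4]
  exact aux_geom' _ hu1 b

lemma telescope' (ℓ : ℕ) (hℓ : 2 ≤ ℓ) (r : ℕ → ℕ) :
    ∑ i ∈ Finset.Ico 1 ℓ,
        ((r i + r (i - 1) : ℝ)) * (∑ k ∈ Finset.Ico i ℓ, (r k : ℝ))
      = (∑ k ∈ Finset.Ico 0 ℓ, (r k : ℝ)) * (∑ k ∈ Finset.Ico 1 ℓ, (r k : ℝ)) := by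
  set S : ℕ → ℝ := fun j => ∑ k ∈ Finset.Ico j ℓ, (r k : ℝ) with hSdef
  have hS : ∀ i < ℓ, S i = r i + S (i+1) := fun i hi =>
    Finset.sum_eq_sum_Ico_succ_bot hi _
  have hstep : ∀ i ∈ Finset.Ico 1 ℓ, ((r i + r (i-1) : ℝ)) * S i
      = S (i-1) * S i - S i * S (i+1) := by
    intro i hi
    obtain ⟨h1, h2⟩ := Finset.mem_Ico.mp hi
    have e1 : S (i-1) = r (i-1) + S i := by
      have := hS (i-1) (by omega)
      rwa [show i - 1 + 1 = i by omega] at this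
    have e2 : S i = r i + S (i+1) := hS i h2
    rw [e1]
    linear_combination (-(S i)) * e2
  rw [Finset.sum_congr rfl hstep, Finset.sum_Ico_eq_sum_range]
  have h3 : ∀ j ∈ Finset.range (ℓ - 1),
      S (1 + j - 1) * S (1 + j) - S (1 + j) * S (1 + j + 1)
        = (fun k => S k * S (k+1)) j - (fun k => S k * S (k+1)) (j+1) := by
    intro j _
    simp only [show 1 + j - 1 = j by omega, show j + 1 - 1 = j by omega,
      show 1 + j = j + 1 by omega, show 1 + j + 1 = j + 1 + 1 by omega]
  rw [Finset.sum_congr rfl h3, Finset.sum_range_sub']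
  have hSl : S ℓ = 0 := by simp [hSdef]
  have : S (ℓ - 1 + 1) = 0 := by rw [show ℓ - 1 + 1 = ℓ by omega, hSl]
  simp only [this, mul_zero, sub_zero, zero_add]
  rfl


/-- Let `ℓ ≥ 2`, let `r^{(1)}, …, r^{(ℓ)}` be positive integers with sum `r`, let `α` be an
integer, and for `2 ≤ i ≤ ℓ` set `mᵢ = r^{(i)} + r^{(i−1)}` and
`cᵢ = (α/r)·Σ_{k=i}^{ℓ} r^{(k)}`.  Then for every real `y > 1`, the series
`Σ y^{2α(r − r^{(1)}) − 2Σ_{i=2}^{ℓ} mᵢsᵢ}`, summed over all integer tuples `(s₂,…,s_ℓ)` with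
`sᵢ > cᵢ`, converges absolutely and equals
`(−1)^{ℓ−1}·Π_{i=2}^{ℓ} y^{2mᵢ{cᵢ}}/(1 − y^{2mᵢ})` where `{x}` is the fractional part.
(Indices are shifted by one: the parts are `r 0, …, r (ℓ−1)` and the paper's
`i ∈ {2,…,ℓ}` corresponds to `i ∈ Finset.Ico 1 ℓ`.) -/
theorem stmt14 (ℓ : ℕ) (hℓ : 2 ≤ ℓ) (r : ℕ → ℕ) (hr : ∀ i < ℓ, 0 < r i) (α : ℤ)
    (y : ℝ) (hy : 1 < y) :
    let R : ℕ := ∑ i ∈ Finset.range ℓ, r i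
    let m : ℕ → ℕ := fun i => r i + r (i - 1)
    let c : ℕ → ℝ := fun i => (α : ℝ) / (R : ℝ) * ∑ k ∈ Finset.Ico i ℓ, (r k : ℝ)
    let T := { s : (Finset.Ico 1 ℓ : Finset ℕ) → ℤ //
      ∀ i : (Finset.Ico 1 ℓ : Finset ℕ), c i.1 < (s i : ℝ) }
    let F : T → ℝ := fun s =>
      y ^ (2 * α * ((R : ℤ) - (r 0 : ℤ))
        - 2 * ∑ i : (Finset.Ico 1 ℓ : Finset ℕ), (m i.1 : ℤ) * s.1 i)
    (Summable fun s : T => |F s|) ∧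
      (∑' s : T, F s) = (-1 : ℝ) ^ (ℓ - 1) *
        ∏ i ∈ Finset.Ico 1 ℓ, y ^ (2 * (m i : ℝ) * Int.fract (c i)) / (1 - y ^ (2 * m i)) := by
  
  intro R m c T F
  classical
  have hy0 : (0:ℝ) < y := one_pos.trans hy
  have hyne : y ≠ 0 := ne_of_gt hy0
  have hm : ∀ i ∈ Finset.Ico 1 ℓ, 0 < m i := by
    intro i hi
    obtain ⟨h1, h2⟩ := Finset.mem_Ico.mp hi
    have := hr i h2
    simp only [m]; omega
  -- the equivalence
  have hEmem : ∀ (t : (Finset.Ico 1 ℓ : Finset ℕ) → ℕ)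
      (i : (Finset.Ico 1 ℓ : Finset ℕ)), c i.1 < ((⌊c i.1⌋ + 1 + (t i : ℤ) : ℤ) : ℝ) := by
    intro t i
    have h := Int.lt_floor_add_one (c i.1)
    have h2 : (0:ℝ) ≤ (t i : ℝ) := Nat.cast_nonneg _
    push_cast
    linarith
  set E : ((Finset.Ico 1 ℓ : Finset ℕ) → ℕ) ≃ T :=
  { toFun := fun t => ⟨fun i => ⌊c i.1⌋ + 1 + (t i : ℤ), hEmem t⟩
    invFun := fun s => fun i => (s.1 i - (⌊c i.1⌋ + 1)).toNat
    left_inv := fun t => by funext i; simp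
    right_inv := fun s => by
      apply Subtype.ext; funext i
      have h1 : ⌊c i.1⌋ < s.1 i := Int.floor_lt.mpr (s.2 i)
      simp only
      rw [Int.toNat_of_nonneg (by omega)]
      omega } with hE
  -- summand factors
  set f : ℕ → ℕ → ℝ :=
    fun i t => y ^ (-(2 * (m i : ℤ) * (⌊c i⌋ + 1 + (t : ℤ)))) with hf
  set a : ℕ → ℝ :=
    fun i => -(y ^ (-(2 * (m i : ℤ) * ⌊c i⌋)) / (1 - y ^ (2 * m i))) with ha
  have hfa : ∀ i : (Finset.Ico 1 ℓ : Finset ℕ), HasSum (f i.1) (a i.1) := by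
    intro i
    have hmi := hm i.1 i.2
    have hq0 : (0:ℝ) ≤ y ^ (-(2 * (m i.1 : ℤ))) := le_of_lt (zpow_pos hy0 _)
    have hq1 : y ^ (-(2 * (m i.1 : ℤ))) < 1 := by
      have he : y ^ (-(2 * (m i.1 : ℤ))) = (y ^ (2 * m i.1 : ℕ))⁻¹ := by
        rw [← zpow_natCast y, ← zpow_neg]; norm_num
      rw [he]; exact inv_lt_one_of_one_lt₀ (one_lt_pow₀ hy (by omega))
    have hgeo := (hasSum_geometric_of_lt_one hq0 hq1).mul_left
      (y ^ (-(2 * (m i.1 : ℤ) * (⌊c i.1⌋ + 1))))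
    have hfun : f i.1 = fun t : ℕ =>
        y ^ (-(2 * (m i.1 : ℤ) * (⌊c i.1⌋ + 1))) * (y ^ (-(2 * (m i.1 : ℤ)))) ^ t := by
      funext t
      simp only [hf]
      rw [← zpow_natCast (y ^ (-(2 * (m i.1 : ℤ)))) t, ← zpow_mul, ← zpow_add₀ hyne]
      congr 1; push_cast; ring
    rw [hfun, ha]
    rw [key_factor' hy (m i.1) hmi ⌊c i.1⌋] at hgeo
    exact hgeo
  have hnn : ∀ (i : (Finset.Ico 1 ℓ : Finset ℕ)) (k : ℕ), 0 ≤ f i.1 k :=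
    fun i k => le_of_lt (zpow_pos hy0 _)
  have hPi := hasSum_pi' (fun i : (Finset.Ico 1 ℓ : Finset ℕ) => f i.1)
    (fun i : (Finset.Ico 1 ℓ : Finset ℕ) => a i.1) hfa hnn
  set C : ℝ := y ^ (2 * α * ((R : ℤ) - (r 0 : ℤ))) with hC
  have hCsum := hPi.mul_left C
  have hcomp : (F ∘ E) = fun t => C * ∏ i : (Finset.Ico 1 ℓ : Finset ℕ), f i.1 (t i) := by
    funext t
    simp only [Function.comp, hE, F, Equiv.coe_fn_mk, hC, hf]
    rw [← zpow_finset_sum' y hyne, ← zpow_add₀ hyne]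
    congr 1
    rw [sub_eq_add_neg]
    congr 1
    rw [Finset.mul_sum, ← Finset.sum_neg_distrib]
    exact Finset.sum_congr rfl (fun x _ => by ring)
  have hFsum : HasSum F (C * ∏ i : (Finset.Ico 1 ℓ : Finset ℕ), a i.1) := by
    rw [← E.hasSum_iff, hcomp]
    exact hCsum
  constructor
  · have habs : (fun s : T => |F s|) = F := by
      funext s
      exact abs_of_pos (zpow_pos hy0 _)
    rw [habs]
    exact hFsum.summable
  · rw [hFsum.tsum_eq]
    rw [Finset.prod_coe_sort]
    have hRpos : 0 < R := by
      simp only [R]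
      exact Finset.sum_pos (fun i hi => hr i (Finset.mem_range.mp hi))
        ⟨0, Finset.mem_range.mpr (by omega)⟩
    have hRne : (R : ℝ) ≠ 0 := by positivity
    have hterm : ∀ i ∈ Finset.Ico 1 ℓ, a i =
        (-1 : ℝ) * (y ^ (-(2 * (m i : ℝ) * c i)) *
          (y ^ (2 * (m i : ℝ) * Int.fract (c i)) / (1 - y ^ (2 * m i)))) := by
      intro i hi
      have h5 : (y : ℝ) ^ (-(2 * (m i : ℤ) * ⌊c i⌋)) =
          y ^ (-(2 * (m i : ℝ) * c i)) * y ^ (2 * (m i : ℝ) * Int.fract (c i)) := by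
        rw [← Real.rpow_add hy0, ← Real.rpow_intCast y (-(2 * (m i : ℤ) * ⌊c i⌋))]
        congr 1
        rw [Int.fract]
        push_cast
        ring
      simp only [ha]
      rw [h5]
      ring
    rw [Finset.prod_congr rfl hterm, Finset.prod_mul_distrib, Finset.prod_mul_distrib,
      Finset.prod_const, Nat.card_Ico]
    have hCu : C * ∏ i ∈ Finset.Ico 1 ℓ, y ^ (-(2 * (m i : ℝ) * c i)) = 1 := by
      have hC' : C = y ^ ((2 * α * ((R : ℤ) - (r 0 : ℤ)) : ℤ) : ℝ) :=
        (Real.rpow_intCast y _).symm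
      rw [hC', ← Real.rpow_sum_of_pos hy0, ← Real.rpow_add hy0]
      have hexp : ((2 * α * ((R : ℤ) - (r 0 : ℤ)) : ℤ) : ℝ)
          + ∑ i ∈ Finset.Ico 1 ℓ, -(2 * (m i : ℝ) * c i) = 0 := by
        have hsum : ∑ i ∈ Finset.Ico 1 ℓ, -(2 * (m i : ℝ) * c i)
            = -(2 * (α : ℝ) / R) * ∑ i ∈ Finset.Ico 1 ℓ,
                ((r i + r (i - 1) : ℝ)) * (∑ k ∈ Finset.Ico i ℓ, (r k : ℝ)) := by
          rw [Finset.mul_sum]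
          refine Finset.sum_congr rfl (fun i hi => ?_)
          simp only [m, c]
          push_cast
          ring
        rw [hsum, telescope' ℓ hℓ r]
        have hS0 : (∑ k ∈ Finset.Ico 0 ℓ, (r k : ℝ)) = (R : ℝ) := by
          simp only [R]
          rw [Finset.range_eq_Ico]
          push_cast
          rfl
        have hS1 : (∑ k ∈ Finset.Ico 1 ℓ, (r k : ℝ)) = (R : ℝ) - r 0 := by
          have h0 : (∑ k ∈ Finset.Ico 0 ℓ, (r k : ℝ))
              = r 0 + ∑ k ∈ Finset.Ico 1 ℓ, (r k : ℝ) :=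
            Finset.sum_eq_sum_Ico_succ_bot (by omega) _
          rw [hS0] at h0
          linarith
        rw [hS0, hS1]
        push_cast
        field_simp
        ring
      rw [hexp, Real.rpow_zero]
    have hre : C * ((-1 : ℝ) ^ (ℓ - 1) * ((∏ i ∈ Finset.Ico 1 ℓ, y ^ (-(2 * (m i : ℝ) * c i))) *
        (∏ i ∈ Finset.Ico 1 ℓ, y ^ (2 * (m i : ℝ) * Int.fract (c i)) / (1 - y ^ (2 * m i)))))
        = (-1 : ℝ) ^ (ℓ - 1) *
          ((C * ∏ i ∈ Finset.Ico 1 ℓ, y ^ (-(2 * (m i : ℝ) * c i))) *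
          (∏ i ∈ Finset.Ico 1 ℓ, y ^ (2 * (m i : ℝ) * Int.fract (c i)) / (1 - y ^ (2 * m i)))) := by
      ring
    rw [hre, hCu, one_mul]
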